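/- arXiv:2108.13405 — 2 statements merged into one kernel-verified Lean document; each statement's English description precedes it below -/
import Mathlib

section
/- The von Mises probability density f(θ) = exp(κ cos(θ - μ))/(2π I₀(κ)) integrates to 1 over [0, 2π), where I₀(κ) = ∑_{r=0}^∞ (κ²/4)^r/(r!)² is the modified Bessel function of the first kind of order zero. -/
open Real intervalIntegral

private lemma vm_cos_pow_odd (r : ℕ) :
    ∫ x in (0:ℝ)..(2*π), Real.cos x ^ (2*r+1) = 0 := by
  have h := integral_sin_pow_mul_cos_pow_odd (a := 0) (b := 2*π) 0 r
  simpa [Real.sin_two_pi] using h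

private lemma vm_cos_pow_even (r : ℕ) : ∫ x in (0:ℝ)..(2*π), Real.cos x ^ (2*r) =
    2*π * (2*r).factorial / (4^r * ((r.factorial : ℝ))^2) := by
  induction r with
  | zero => simp
  | succ k ih =>
    have h := integral_cos_pow (a := 0) (b := 2*π) (n := 2*k)
    have h2 : 2*(k+1) = 2*k+2 := by ring
    rw [h2, h, ih, Real.sin_two_pi, Real.sin_zero]
    have e1 : ((2*k+2).factorial : ℝ) = (2*k+2) * ((2*k+1) * ((2*k).factorial : ℝ)) := by
      have : 2*k+2 = (2*k+1)+1 := by ring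
      rw [this, Nat.factorial_succ, Nat.factorial_succ]
      push_cast; ring
    have e2 : ((k+1).factorial : ℝ) = (k+1) * (k.factorial : ℝ) := by
      rw [Nat.factorial_succ]; push_cast; ring
    rw [e1, e2]
    have hf : (0:ℝ) < (2*k).factorial := by positivity
    have hg : (0:ℝ) < (k.factorial : ℝ) := by positivity
    have h4 : (0:ℝ) < 4^k := by positivity
    field_simp
    push_cast; ring

private lemma vm_interchange (κ : ℝ) (hκ : 0 ≤ κ) :
    ∑' n : ℕ, ∫ x in (0:ℝ)..(2*π), (κ * Real.cos x)^n / (n.factorial : ℝ)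
      = ∫ x in (0:ℝ)..(2*π), Real.exp (κ * Real.cos x) := by
  classical
  have hle : (0:ℝ) ≤ 2*π := by positivity
  have hexp : ∀ x : ℝ, Real.exp (κ * Real.cos x)
      = ∑' n : ℕ, (κ * Real.cos x)^n / (n.factorial : ℝ) := by
    intro x
    rw [Real.exp_eq_exp_ℝ, NormedSpace.exp_eq_tsum_div]
  have hint : ∀ n : ℕ, MeasureTheory.IntegrableOn
      (fun x => (κ * Real.cos x)^n / (n.factorial : ℝ)) (Set.Ioc 0 (2*π)) MeasureTheory.volume := by
    intro n
    exact (Continuous.integrableOn_Ioc (by fun_prop))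
  have hnorm : ∀ n : ℕ, (∫ x in Set.Ioc (0:ℝ) (2*π), ‖(κ * Real.cos x)^n / (n.factorial : ℝ)‖)
      ≤ 2*π * (κ^n / (n.factorial : ℝ)) := by
    intro n
    have hb : ∀ x ∈ Set.Ioc (0:ℝ) (2*π),
        ‖(κ * Real.cos x)^n / (n.factorial : ℝ)‖ ≤ κ^n / (n.factorial : ℝ) := by
      intro x _
      have h1 : ‖κ * Real.cos x‖ ≤ κ := by
        calc ‖κ * Real.cos x‖ = κ * |Real.cos x| := by
              rw [norm_mul, Real.norm_of_nonneg hκ]; rfl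
          _ ≤ κ * 1 := by gcongr; exact abs_cos_le_one x
          _ = κ := mul_one κ
      calc ‖(κ * Real.cos x)^n / (n.factorial : ℝ)‖
            = ‖κ * Real.cos x‖^n / (n.factorial : ℝ) := by
            rw [norm_div, norm_pow]; simp
        _ ≤ κ^n / (n.factorial : ℝ) := by
            gcongr
    calc (∫ x in Set.Ioc (0:ℝ) (2*π), ‖(κ * Real.cos x)^n / (n.factorial : ℝ)‖)
        ≤ ∫ _x in Set.Ioc (0:ℝ) (2*π), κ^n / (n.factorial : ℝ) := by
          apply MeasureTheory.setIntegral_mono_on (hint n).norm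
            (MeasureTheory.integrableOn_const (by simp [Real.volume_Ioc, ENNReal.mul_eq_top]))
            measurableSet_Ioc hb
      _ = 2*π * (κ^n / (n.factorial : ℝ)) := by
          simp [Real.volume_Ioc, ENNReal.toReal_ofReal hle, Real.pi_pos.le]
  have hsum : Summable (fun n : ℕ =>
      ∫ x in Set.Ioc (0:ℝ) (2*π), ‖(κ * Real.cos x)^n / (n.factorial : ℝ)‖) := by
    apply Summable.of_nonneg_of_le
      (fun n => MeasureTheory.integral_nonneg (fun x => norm_nonneg _)) hnorm
    exact (Real.summable_pow_div_factorial κ).mul_left _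
  have key := MeasureTheory.integral_tsum_of_summable_integral_norm
    (F := fun (n : ℕ) (x : ℝ) => (κ * Real.cos x)^n / (n.factorial : ℝ))
    (μ := MeasureTheory.volume.restrict (Set.Ioc (0:ℝ) (2*π))) hint hsum
  rw [intervalIntegral.integral_of_le hle]
  simp only [intervalIntegral.integral_of_le hle]
  rw [key]
  congr 1
  ext x
  rw [hexp x]

theorem stmt_9 (κ μ : ℝ) (hκ : 0 ≤ κ)
    (I₀ : ℝ) (hI₀ : I₀ = ∑' r : ℕ, (κ ^ 2 / 4) ^ r / (Nat.factorial r : ℝ) ^ 2) :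
    ∫ θ in (0:ℝ)..(2 * π), Real.exp (κ * Real.cos (θ - μ)) / (2 * π * I₀) = 1 := by
  have hπ : (0:ℝ) < π := Real.pi_pos
  -- summability of the Bessel series
  have hsum0 : Summable (fun r : ℕ => (κ ^ 2 / 4) ^ r / (Nat.factorial r : ℝ) ^ 2) := by
    have hb : ∀ r : ℕ, (κ ^ 2 / 4) ^ r / (Nat.factorial r : ℝ) ^ 2
        ≤ (κ ^ 2 / 4) ^ r / (Nat.factorial r : ℝ) := by
      intro r
      have h1 : (1:ℝ) ≤ (r.factorial : ℝ) := by exact_mod_cast r.factorial_pos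
      have h2 : (r.factorial : ℝ) ≤ (r.factorial : ℝ)^2 := le_self_pow₀ h1 two_ne_zero
      have h3 : (0:ℝ) < (r.factorial : ℝ) := by positivity
      gcongr
    exact (Real.summable_pow_div_factorial (κ ^ 2 / 4)).of_nonneg_of_le
      (fun r => by positivity) hb
  -- positivity of I₀
  have hI₀pos : 0 < I₀ := by
    rw [hI₀]
    have := Summable.le_tsum hsum0 0 (fun i _ => by positivity)
    simp only [pow_zero, Nat.factorial_zero, Nat.cast_one, one_pow, div_one] at this
    linarith
  -- shift away μ by periodicity
  have hper : Function.Periodic (fun θ => Real.exp (κ * Real.cos θ)) (2*π) := by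
    intro x; simp [Real.cos_add_two_pi]
  have hshift : (∫ θ in (0:ℝ)..(2*π), Real.exp (κ * Real.cos (θ - μ)))
      = ∫ θ in (0:ℝ)..(2*π), Real.exp (κ * Real.cos θ) := by
    have h0 : (∫ θ in (0:ℝ)..(2*π), Real.exp (κ * Real.cos (θ - μ)))
        = ∫ θ in (0-μ)..(2*π-μ), Real.exp (κ * Real.cos θ) :=
      intervalIntegral.integral_comp_sub_right (fun θ => Real.exp (κ * Real.cos θ)) μ
    have h2 : (2*π - μ) = (0 - μ) + 2*π := by ring
    rw [h0, h2, hper.intervalIntegral_add_eq (0-μ) 0, zero_add]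
  -- compute each term of the series
  have geven : ∀ r : ℕ, (∫ x in (0:ℝ)..(2*π), (κ * Real.cos x)^(2*r) / ((2*r).factorial : ℝ))
      = 2*π * ((κ ^ 2 / 4) ^ r / (Nat.factorial r : ℝ) ^ 2) := by
    intro r
    have h1 : (∫ x in (0:ℝ)..(2*π), (κ * Real.cos x)^(2*r) / ((2*r).factorial : ℝ))
        = (κ^(2*r) / ((2*r).factorial : ℝ)) * ∫ x in (0:ℝ)..(2*π), Real.cos x ^ (2*r) := by
      rw [← intervalIntegral.integral_const_mul]
      congr 1; ext x; rw [mul_pow]; ring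
    rw [h1, vm_cos_pow_even]
    have hf : (0:ℝ) < ((2*r).factorial : ℝ) := by positivity
    have hg : (0:ℝ) < (r.factorial : ℝ) := by positivity
    have h4 : (0:ℝ) < (4:ℝ)^r := by positivity
    have hκ2 : κ^(2*r) = (κ^2)^r := by rw [← pow_mul]
    rw [div_pow, hκ2]
    field_simp
  have godd : ∀ r : ℕ, (∫ x in (0:ℝ)..(2*π), (κ * Real.cos x)^(2*r+1) / ((2*r+1).factorial : ℝ))
      = 0 := by
    intro r
    have h1 : (∫ x in (0:ℝ)..(2*π), (κ * Real.cos x)^(2*r+1) / ((2*r+1).factorial : ℝ))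
        = (κ^(2*r+1) / ((2*r+1).factorial : ℝ)) * ∫ x in (0:ℝ)..(2*π), Real.cos x ^ (2*r+1) := by
      rw [← intervalIntegral.integral_const_mul]
      congr 1; ext x; rw [mul_pow]; ring
    rw [h1, vm_cos_pow_odd, mul_zero]
  -- sum the series
  set g : ℕ → ℝ := fun n => ∫ x in (0:ℝ)..(2*π), (κ * Real.cos x)^n / (n.factorial : ℝ) with hg
  have hge : Summable (fun k => g (2*k)) := by
    have : (fun k => g (2*k)) = fun k => 2*π * ((κ ^ 2 / 4) ^ k / (Nat.factorial k : ℝ) ^ 2) := by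
      funext k; exact geven k
    rw [this]
    exact hsum0.mul_left _
  have hgo : Summable (fun k => g (2*k+1)) := by
    have : (fun k => g (2*k+1)) = fun _ => (0:ℝ) := by funext k; exact godd k
    rw [this]; exact summable_zero
  have htot : (∑' n, g n) = 2*π*I₀ := by
    rw [← tsum_even_add_odd hge hgo]
    have h1 : (∑' k, g (2*k)) = 2*π*I₀ := by
      calc (∑' k, g (2*k)) = ∑' k, 2*π * ((κ ^ 2 / 4) ^ k / (Nat.factorial k : ℝ) ^ 2) := by
            congr 1; funext k; exact geven k
        _ = 2*π*I₀ := by rw [tsum_mul_left, hI₀]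
    have h2 : (∑' k, g (2*k+1)) = 0 := by
      have : (fun k => g (2*k+1)) = fun _ => (0:ℝ) := by funext k; exact godd k
      rw [this, tsum_zero]
    rw [h1, h2, add_zero]
  have hIval : (∫ θ in (0:ℝ)..(2*π), Real.exp (κ * Real.cos θ)) = 2*π*I₀ := by
    rw [← vm_interchange κ hκ, htot]
  rw [intervalIntegral.integral_div, hshift, hIval, div_self]
  positivity
end

section
/- For symmetric positive semidefinite n×n matrices A and B, the Bures-Wasserstein quantity d_BW(A,B)² := trace(A) + trace(B) - 2·trace((√A · B · √A)^{1/2}) is nonnegative, and d_BW(A,B) = 0 when A = B. -/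
open Matrix

section

open scoped ComplexOrder

/-- The matrix square root of a positive semidefinite matrix, as defined in Mathlib (Dec 2024). -/
noncomputable def Matrix.PosSemidef.sqrt {n 𝕜 : Type*} [Fintype n] [DecidableEq n] [RCLike 𝕜]
    {A : Matrix n n 𝕜} (hA : A.PosSemidef) : Matrix n n 𝕜 :=
  hA.1.eigenvectorUnitary.1 * diagonal ((↑) ∘ (√·) ∘ hA.1.eigenvalues) *
    (star hA.1.eigenvectorUnitary : Matrix n n 𝕜)

end

private lemma Matrix.PosSemidef.sqrt_eq_cfc {n : ℕ} {A : Matrix (Fin n) (Fin n) ℝ}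
    (hA : A.PosSemidef) : hA.sqrt = cfc Real.sqrt A := by
  rw [hA.1.cfc_eq, IsHermitian.cfc, Unitary.conjStarAlgAut_apply]
  rfl

private lemma Matrix.PosSemidef.spec_nonneg {n : ℕ} {A : Matrix (Fin n) (Fin n) ℝ}
    (hA : A.PosSemidef) : ∀ x ∈ spectrum ℝ A, 0 ≤ x := by
  intro x hx
  rw [hA.1.spectrum_real_eq_range_eigenvalues] at hx
  obtain ⟨i, rfl⟩ := hx
  exact hA.eigenvalues_nonneg i

private lemma Matrix.PosSemidef.sqrt_mul_self {n : ℕ} {A : Matrix (Fin n) (Fin n) ℝ}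
    (hA : A.PosSemidef) : hA.sqrt * hA.sqrt = A := by
  have hsa : IsSelfAdjoint A := hA.1
  rw [hA.sqrt_eq_cfc, ← cfc_mul Real.sqrt Real.sqrt A]
  conv_rhs => rw [← cfc_id' ℝ A]
  refine cfc_congr fun x hx => ?_
  exact Real.mul_self_sqrt (hA.spec_nonneg x hx)

private lemma Matrix.PosSemidef.posSemidef_sqrt {n : ℕ} {A : Matrix (Fin n) (Fin n) ℝ}
    (hA : A.PosSemidef) : hA.sqrt.PosSemidef := by
  unfold Matrix.PosSemidef.sqrt
  have hd : (diagonal ((↑) ∘ (√·) ∘ hA.1.eigenvalues) : Matrix (Fin n) (Fin n) ℝ).PosSemidef := by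
    rw [posSemidef_diagonal_iff]
    intro i
    exact Real.sqrt_nonneg _
  have := hd.mul_mul_conjTranspose_same (hA.1.eigenvectorUnitary : Matrix (Fin n) (Fin n) ℝ)
  exact this

private lemma Matrix.PosSemidef.eq_sqrt_of_sq_eq {n : ℕ} {A S : Matrix (Fin n) (Fin n) ℝ}
    (hA : A.PosSemidef) (hS : S.PosSemidef) (h : A ^ 2 = S) : A = hS.sqrt := by
  have hsa : IsSelfAdjoint A := hA.1
  subst h
  rw [hS.sqrt_eq_cfc, ← cfc_pow_id (R := ℝ) A 2, ← cfc_comp Real.sqrt (fun x : ℝ => x ^ 2) A]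
  conv_lhs => rw [← cfc_id' ℝ A]
  refine cfc_congr fun x hx => ?_
  exact (Real.sqrt_sq (hA.spec_nonneg x hx)).symm

private lemma trace_star_mul_self_nonneg {n : ℕ} (M : Matrix (Fin n) (Fin n) ℝ) :
    0 ≤ (star M * M).trace := by
  rw [Matrix.trace]
  refine Finset.sum_nonneg fun j _ => ?_
  rw [Matrix.diag_apply, Matrix.mul_apply]
  refine Finset.sum_nonneg fun i _ => ?_
  simp only [Matrix.star_eq_conjTranspose, Matrix.conjTranspose_apply, star_trivial]
  exact mul_self_nonneg _

private lemma bw_key {n : ℕ} (C D P : Matrix (Fin n) (Fin n) ℝ)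
    (hC : C.IsHermitian) (hD : D.IsHermitian) (hP : P.PosSemidef)
    (h : P * P = C * (D * D) * C) :
    2 * P.trace ≤ (C * C).trace + (D * D).trace := by
  classical
  set σ : Fin n → ℝ := hP.1.eigenvalues with hσdef
  set V : Matrix (Fin n) (Fin n) ℝ := (hP.1.eigenvectorUnitary : Matrix (Fin n) (Fin n) ℝ)
    with hVdef
  have hV1 : star V * V = 1 := (Unitary.mem_iff.mp hP.1.eigenvectorUnitary.2).1
  have hV2 : V * star V = 1 := (Unitary.mem_iff.mp hP.1.eigenvectorUnitary.2).2
  have hV1' : ∀ X : Matrix (Fin n) (Fin n) ℝ, star V * (V * X) = X := fun X => by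
    rw [← Matrix.mul_assoc, hV1, Matrix.one_mul]
  have hPE : P = V * diagonal σ * star V := by
    have hsp := hP.1.spectral_theorem
    rw [Unitary.conjStarAlgAut_apply] at hsp
    exact hsp
  set E : Matrix (Fin n) (Fin n) ℝ := diagonal σ with hEdef
  set F : Matrix (Fin n) (Fin n) ℝ := diagonal (fun i => (σ i)⁻¹) with hFdef
  have hEs : star E = E := by
    rw [hEdef, Matrix.star_eq_conjTranspose, Matrix.diagonal_conjTranspose]
    simp
  have hFs : star F = F := by
    rw [hFdef, Matrix.star_eq_conjTranspose, Matrix.diagonal_conjTranspose]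
    simp
  have hCs : star C = C := by rw [Matrix.star_eq_conjTranspose]; exact hC
  have hDs : star D = D := by rw [Matrix.star_eq_conjTranspose]; exact hD
  set W : Matrix (Fin n) (Fin n) ℝ := D * C * V with hWdef
  set N : Matrix (Fin n) (Fin n) ℝ := W * F with hNdef
  have hWW : star W * W = E * E := by
    have h1 : star W * W = star V * ((C * (D * D) * C) * V) := by
      rw [hWdef, Matrix.star_mul, Matrix.star_mul, hCs, hDs]
      simp only [Matrix.mul_assoc]
    rw [h1, ← h, hPE]
    simp only [Matrix.mul_assoc, hV1']
    rw [hV1, Matrix.mul_one]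
  have hNW : star N * W = F * (E * E) := by
    rw [hNdef, Matrix.star_mul, hFs, Matrix.mul_assoc, hWW]
  have htrP : P.trace = (star N * W).trace := by
    rw [hNW, hPE, Matrix.mul_assoc, Matrix.trace_mul_comm, Matrix.mul_assoc, hV1,
      Matrix.mul_one, hFdef, hEdef, Matrix.diagonal_mul_diagonal, Matrix.diagonal_mul_diagonal,
      Matrix.trace_diagonal, Matrix.trace_diagonal]
    refine Finset.sum_congr rfl fun i _ => ?_
    rcases eq_or_ne (σ i) 0 with h0 | h0
    · simp [h0]
    · field_simp
  set Q : Matrix (Fin n) (Fin n) ℝ := N * star N with hQdef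
  have hQs : star Q = Q := by rw [hQdef, Matrix.star_mul, star_star]
  have hNN : star N * N = F * (E * E * F) := by
    rw [hNdef, Matrix.star_mul, hFs, Matrix.mul_assoc, ← Matrix.mul_assoc (star W) W F, hWW]
  have hFF : F * (F * (E * E * F)) = F := by
    rw [hFdef, hEdef]
    simp only [Matrix.diagonal_mul_diagonal]
    refine congrArg Matrix.diagonal (funext fun i => ?_)
    rcases eq_or_ne (σ i) 0 with h0 | h0
    · simp [Pi.mul_apply, h0]
    · field_simp [Pi.mul_apply]
  have hNJ : N * (star N * N) = N := by
    rw [hNN, hNdef, Matrix.mul_assoc W F, hFF]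
  have hQQ : Q * Q = Q := by
    have e : Q * Q = N * (star N * N) * star N := by
      rw [hQdef]; simp only [Matrix.mul_assoc]
    rw [e, hNJ]
  set Y : Matrix (Fin n) (Fin n) ℝ := D * N with hYdef
  set Z : Matrix (Fin n) (Fin n) ℝ := C * V with hZdef
  have hYZ : star Y * Z = star N * W := by
    rw [hYdef, hZdef, hWdef, Matrix.star_mul, hDs]
    simp only [Matrix.mul_assoc]
  have hAM : 2 * (star Y * Z).trace ≤ (star Y * Y).trace + (star Z * Z).trace := by
    have h0 : 0 ≤ (star (Y - Z) * (Y - Z)).trace := trace_star_mul_self_nonneg _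
    have hexp : star (Y - Z) * (Y - Z) =
        star Y * Y - star Y * Z - star Z * Y + star Z * Z := by
      rw [star_sub, Matrix.sub_mul, Matrix.mul_sub, Matrix.mul_sub]
      abel
    have htr : (star Z * Y).trace = (star Y * Z).trace := by
      have h1 : star (star Y * Z) = star Z * Y := by rw [Matrix.star_mul, star_star]
      rw [← h1, Matrix.star_eq_conjTranspose, Matrix.trace_conjTranspose, star_trivial]
    rw [hexp, Matrix.trace_add, Matrix.trace_sub, Matrix.trace_sub, htr] at h0
    linarith
  have hY : (star Y * Y).trace ≤ (D * D).trace := by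
    have e1 : (star Y * Y).trace = ((D * D) * Q).trace := by
      rw [hYdef, Matrix.star_mul, hDs, hQdef]
      have e : star N * D * (D * N) = star N * ((D * D) * N) := by
        simp only [Matrix.mul_assoc]
      rw [e, Matrix.trace_mul_comm, Matrix.mul_assoc]
    have hstar : star (D * (1 - Q)) * (D * (1 - Q)) = (1 - Q) * ((D * D) * (1 - Q)) := by
      rw [Matrix.star_mul, star_sub, star_one, hQs, hDs]
      simp only [Matrix.mul_assoc]
    have e2 : (star (D * (1 - Q)) * (D * (1 - Q))).trace =
        (D * D).trace - ((D * D) * Q).trace := by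
      have h1Q : (1 - Q) * (1 - Q) = 1 - Q := by
        rw [Matrix.sub_mul, Matrix.mul_sub, Matrix.mul_sub, hQQ, Matrix.one_mul,
          Matrix.mul_one, Matrix.one_mul]
        abel
      rw [hstar, Matrix.trace_mul_comm, Matrix.mul_assoc, h1Q, Matrix.mul_sub,
        Matrix.mul_one, Matrix.trace_sub]
    have h0 : 0 ≤ (star (D * (1 - Q)) * (D * (1 - Q))).trace := trace_star_mul_self_nonneg _
    linarith
  have hZ2 : (star Z * Z).trace = (C * C).trace := by
    rw [hZdef, Matrix.star_mul, hCs]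
    have e : star V * C * (C * V) = star V * ((C * C) * V) := by
      simp only [Matrix.mul_assoc]
    rw [e, Matrix.trace_mul_comm, Matrix.mul_assoc, hV2, Matrix.mul_one]
  rw [htrP, ← hYZ]
  linarith

theorem stmt_11 (n : ℕ) (A B S : Matrix (Fin n) (Fin n) ℝ)
    (hA : A.PosSemidef) (hB : B.PosSemidef)
    (hSeq : S = hA.sqrt * B * hA.sqrt) (hS : S.PosSemidef) :
    0 ≤ A.trace + B.trace - 2 * (hS.sqrt).trace ∧
    (A = B → A.trace + B.trace - 2 * (hS.sqrt).trace = 0) := by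
  constructor
  · have hPP : hS.sqrt * hS.sqrt = hA.sqrt * (hB.sqrt * hB.sqrt) * hA.sqrt := by
      rw [hS.sqrt_mul_self, hB.sqrt_mul_self]
      exact hSeq
    have hkey := bw_key hA.sqrt hB.sqrt hS.sqrt hA.posSemidef_sqrt.1 hB.posSemidef_sqrt.1
      hS.posSemidef_sqrt hPP
    rw [hA.sqrt_mul_self, hB.sqrt_mul_self] at hkey
    linarith
  · intro hAB
    subst hAB
    have h2 : A ^ 2 = S := by
      set R : Matrix (Fin n) (Fin n) ℝ := hA.sqrt with hR
      have hs : R * R = A := hA.sqrt_mul_self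
      rw [hSeq, pow_two, ← hs]
      simp only [Matrix.mul_assoc]
    have hAS : A = hS.sqrt := hA.eq_sqrt_of_sq_eq hS h2
    rw [← hAS]
    ring
end
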